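/- Identify ℝ⁴ with ℂ² via z₁ = x₀ + i·x₁, z₂ = x₂ + i·x₃, and for x ≠ 0 let γ(x) = (1/|x|)·(x₀·I₂ − i(x₁σ₁ + x₂σ₂ + x₃σ₃)) where |x| is the Euclidean norm. Define A₁(z) = z̄₁σ₁ − i·z̄₂σ₂ + z̄₂σ₃ and A₂(z) = −z̄₂σ₁ + i·z̄₁σ₂ + z̄₁σ₃. Then for every z ≠ 0 and j = 1, 2: γ(z)⁻¹·∂ⱼγ(z) = −(1/(2|z|²))·Aⱼ(z) and γ(z)⁻¹·∂̄ⱼγ(z) = (1/(2|z|²))·Aⱼ(z)*, where |z|² = |z₁|² + |z₂|². (That is, γ⁻¹dγ = −(1/(2|z|²))(η − η*) with η = A₁dz₁ + A₂dz₂.) -/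

import Mathlib

open scoped Matrix

attribute [local instance] Matrix.normedAddCommGroup Matrix.normedSpace

/-- The Pauli matrix `σ₁`. -/
noncomputable def pauli1 : Matrix (Fin 2) (Fin 2) ℂ := !![0, 1; 1, 0]

/-- The Pauli matrix `σ₂`. -/
noncomputable def pauli2 : Matrix (Fin 2) (Fin 2) ℂ := !![0, -Complex.I; Complex.I, 0]

/-- The Pauli matrix `σ₃`. -/
noncomputable def pauli3 : Matrix (Fin 2) (Fin 2) ℂ := !![1, 0; 0, -1]

/-- The Wirtinger derivative `∂₁` of a real-differentiable function on `ℂ²`. -/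
noncomputable def wderiv1 {E : Type*} [NormedAddCommGroup E] [NormedSpace ℂ E]
    (f : ℂ × ℂ → E) (z : ℂ × ℂ) : E :=
  (1 / 2 : ℂ) • (fderiv ℝ f z (1, 0) - Complex.I • fderiv ℝ f z (Complex.I, 0))

/-- The Wirtinger derivative `∂̄₁` of a real-differentiable function on `ℂ²`. -/
noncomputable def wderivbar1 {E : Type*} [NormedAddCommGroup E] [NormedSpace ℂ E]
    (f : ℂ × ℂ → E) (z : ℂ × ℂ) : E :=
  (1 / 2 : ℂ) • (fderiv ℝ f z (1, 0) + Complex.I • fderiv ℝ f z (Complex.I, 0))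

/-- The Wirtinger derivative `∂₂` of a real-differentiable function on `ℂ²`. -/
noncomputable def wderiv2 {E : Type*} [NormedAddCommGroup E] [NormedSpace ℂ E]
    (f : ℂ × ℂ → E) (z : ℂ × ℂ) : E :=
  (1 / 2 : ℂ) • (fderiv ℝ f z (0, 1) - Complex.I • fderiv ℝ f z (0, Complex.I))

/-- The Wirtinger derivative `∂̄₂` of a real-differentiable function on `ℂ²`. -/
noncomputable def wderivbar2 {E : Type*} [NormedAddCommGroup E] [NormedSpace ℂ E]
    (f : ℂ × ℂ → E) (z : ℂ × ℂ) : E :=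
  (1 / 2 : ℂ) • (fderiv ℝ f z (0, 1) + Complex.I • fderiv ℝ f z (0, Complex.I))

/-- The BPST map `γ` in the complex coordinates `z₁ = x₀ + ix₁`, `z₂ = x₂ + ix₃`. -/
noncomputable def gammaBPSTC (z : ℂ × ℂ) : Matrix (Fin 2) (Fin 2) ℂ :=
  ((Real.sqrt (Complex.normSq z.1 + Complex.normSq z.2) : ℂ))⁻¹ •
    ((z.1.re : ℂ) • (1 : Matrix (Fin 2) (Fin 2) ℂ) -
      Complex.I • ((z.1.im : ℂ) • pauli1 + (z.2.re : ℂ) • pauli2 +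
        (z.2.im : ℂ) • pauli3))

/-- `A₁(z) = z̄₁σ₁ − i·z̄₂σ₂ + z̄₂σ₃`. -/
noncomputable def Abpst1 (z : ℂ × ℂ) : Matrix (Fin 2) (Fin 2) ℂ :=
  (starRingEnd ℂ) z.1 • pauli1 - Complex.I • ((starRingEnd ℂ) z.2 • pauli2) +
    (starRingEnd ℂ) z.2 • pauli3

/-- `A₂(z) = −z̄₂σ₁ + i·z̄₁σ₂ + z̄₁σ₃`. -/
noncomputable def Abpst2 (z : ℂ × ℂ) : Matrix (Fin 2) (Fin 2) ℂ :=
  -((starRingEnd ℂ) z.2 • pauli1) + Complex.I • ((starRingEnd ℂ) z.1 • pauli2) +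
    (starRingEnd ℂ) z.1 • pauli3

noncomputable def Mbpst : (ℂ × ℂ) →L[ℝ] Matrix (Fin 2) (Fin 2) ℂ :=
  ((Complex.reCLM.comp (ContinuousLinearMap.fst ℝ ℂ ℂ)).smulRight (1 : Matrix (Fin 2) (Fin 2) ℂ))
  - ((Complex.imCLM.comp (ContinuousLinearMap.fst ℝ ℂ ℂ)).smulRight (Complex.I • pauli1))
  - ((Complex.reCLM.comp (ContinuousLinearMap.snd ℝ ℂ ℂ)).smulRight (Complex.I • pauli2))
  - ((Complex.imCLM.comp (ContinuousLinearMap.snd ℝ ℂ ℂ)).smulRight (Complex.I • pauli3))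

lemma Mbpst_entries (v : ℂ × ℂ) : Mbpst v =
    !![(v.1.re : ℂ) - Complex.I * v.2.im, -(Complex.I * v.1.im) - v.2.re;
       -(Complex.I * v.1.im) + v.2.re, (v.1.re : ℂ) + Complex.I * v.2.im] := by
  ext i j
  fin_cases i <;> fin_cases j
  all_goals
    simp [Mbpst, pauli1, pauli2, pauli3, Matrix.smul_apply, Matrix.one_apply,
      Matrix.sub_apply, Matrix.add_apply, Complex.real_smul]
  all_goals try ring_nf
  all_goals try simp [Complex.I_sq]
  all_goals try ring

lemma hgamma (w : ℂ × ℂ) : gammaBPSTC w =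
    (Real.sqrt (Complex.normSq w.1 + Complex.normSq w.2))⁻¹ • Mbpst w := by
  rw [Mbpst_entries]
  ext i j
  fin_cases i <;> fin_cases j
  all_goals
    simp [gammaBPSTC, pauli1, pauli2, pauli3, Matrix.smul_apply, Matrix.one_apply,
      Matrix.sub_apply, Matrix.add_apply, Complex.real_smul]
  all_goals try ring_nf
  all_goals try simp [Complex.I_sq]
  all_goals try ring

set_option maxHeartbeats 4000000 in
/-- for `z ≠ 0` and `j = 1, 2`,
`γ⁻¹·∂ⱼγ = −(1/(2|z|²))·Aⱼ(z)` and `γ⁻¹·∂̄ⱼγ = (1/(2|z|²))·Aⱼ(z)*`,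
i.e. `γ⁻¹dγ = −(1/(2|z|²))(η − η*)` with `η = A₁dz₁ + A₂dz₂`. -/
theorem gammaBPSTC_maurer_cartan (z : ℂ × ℂ) (hz : z ≠ 0) :
    (gammaBPSTC z)⁻¹ * wderiv1 gammaBPSTC z =
      -((1 / (2 * ((Complex.normSq z.1 + Complex.normSq z.2 : ℝ) : ℂ))) •
        Abpst1 z) ∧
    (gammaBPSTC z)⁻¹ * wderiv2 gammaBPSTC z =
      -((1 / (2 * ((Complex.normSq z.1 + Complex.normSq z.2 : ℝ) : ℂ))) •
        Abpst2 z) ∧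
    (gammaBPSTC z)⁻¹ * wderivbar1 gammaBPSTC z =
      (1 / (2 * ((Complex.normSq z.1 + Complex.normSq z.2 : ℝ) : ℂ))) •
        star (Abpst1 z) ∧
    (gammaBPSTC z)⁻¹ * wderivbar2 gammaBPSTC z =
      (1 / (2 * ((Complex.normSq z.1 + Complex.normSq z.2 : ℝ) : ℂ))) •
        star (Abpst2 z) := by
  have hs : (0:ℝ) < Complex.normSq z.1 + Complex.normSq z.2 := by
    have hor : z.1 ≠ 0 ∨ z.2 ≠ 0 := by
      by_contra h
      push_neg at h
      exact hz (Prod.ext_iff.2 ⟨h.1, h.2⟩)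
    rcases hor with h | h
    · exact add_pos_of_pos_of_nonneg (Complex.normSq_pos.2 h) (Complex.normSq_nonneg _)
    · exact add_pos_of_nonneg_of_pos (Complex.normSq_nonneg _) (Complex.normSq_pos.2 h)
  have hr : 0 < Real.sqrt (Complex.normSq z.1 + Complex.normSq z.2) := Real.sqrt_pos.2 hs
  -- derivative
  have hre1 : HasFDerivAt (fun w : ℂ × ℂ => w.1.re)
      (Complex.reCLM.comp (ContinuousLinearMap.fst ℝ ℂ ℂ)) z :=
    (Complex.reCLM.comp (ContinuousLinearMap.fst ℝ ℂ ℂ)).hasFDerivAt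
  have him1 : HasFDerivAt (fun w : ℂ × ℂ => w.1.im)
      (Complex.imCLM.comp (ContinuousLinearMap.fst ℝ ℂ ℂ)) z :=
    (Complex.imCLM.comp (ContinuousLinearMap.fst ℝ ℂ ℂ)).hasFDerivAt
  have hre2 : HasFDerivAt (fun w : ℂ × ℂ => w.2.re)
      (Complex.reCLM.comp (ContinuousLinearMap.snd ℝ ℂ ℂ)) z :=
    (Complex.reCLM.comp (ContinuousLinearMap.snd ℝ ℂ ℂ)).hasFDerivAt
  have him2 : HasFDerivAt (fun w : ℂ × ℂ => w.2.im)
      (Complex.imCLM.comp (ContinuousLinearMap.snd ℝ ℂ ℂ)) z :=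
    (Complex.imCLM.comp (ContinuousLinearMap.snd ℝ ℂ ℂ)).hasFDerivAt
  have hS := (((hre1.mul hre1).add (him1.mul him1)).add ((hre2.mul hre2).add (him2.mul him2)))
  simp only [Pi.add_def, Pi.mul_def, ← Complex.normSq_apply] at hS
  have hsqrt := (Real.hasDerivAt_sqrt hs.ne').comp_hasFDerivAt z hS
  have hinv := (hasDerivAt_inv hr.ne').comp_hasFDerivAt z hsqrt
  have htot := hinv.smul Mbpst.hasFDerivAt
  have hgam := htot.congr_of_eventuallyEq (Filter.Eventually.of_forall fun w => hgamma w)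
  have hfd := hgam.fderiv
  simp only [Function.comp_apply] at hfd
  -- abbreviate the norm square
  obtain ⟨s, hsd⟩ : ∃ s : ℝ, Complex.normSq z.1 + Complex.normSq z.2 = s := ⟨_, rfl⟩
  rw [hsd] at hs hr hfd
  -- directional derivatives
  have key : ∀ v : ℂ × ℂ, fderiv ℝ gammaBPSTC z v =
      ((Real.sqrt s : ℝ) : ℂ)⁻¹ • (Mbpst v -
        (((v.1.re * z.1.re + v.1.im * z.1.im + v.2.re * z.2.re + v.2.im * z.2.im : ℝ) : ℂ) /
          ((s : ℝ) : ℂ)) • Mbpst z) := by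
    intro v
    erw [hfd]
    show ((Real.sqrt s)⁻¹ • Mbpst v + ((-(Real.sqrt s ^ 2)⁻¹ • (1 / (2 * Real.sqrt s)) •
      (z.1.re • Complex.reCLM.comp (ContinuousLinearMap.fst ℝ ℂ ℂ) +
          z.1.re • Complex.reCLM.comp (ContinuousLinearMap.fst ℝ ℂ ℂ) +
        (z.1.im • Complex.imCLM.comp (ContinuousLinearMap.fst ℝ ℂ ℂ) +
          z.1.im • Complex.imCLM.comp (ContinuousLinearMap.fst ℝ ℂ ℂ)) +
        (z.2.re • Complex.reCLM.comp (ContinuousLinearMap.snd ℝ ℂ ℂ) +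
          z.2.re • Complex.reCLM.comp (ContinuousLinearMap.snd ℝ ℂ ℂ) +
        (z.2.im • Complex.imCLM.comp (ContinuousLinearMap.snd ℝ ℂ ℂ) +
          z.2.im • Complex.imCLM.comp (ContinuousLinearMap.snd ℝ ℂ ℂ))) :
        (ℂ × ℂ) →L[ℝ] ℝ)) v) • Mbpst z : Matrix (Fin 2) (Fin 2) ℂ) = _
    simp only [ContinuousLinearMap.add_apply, ContinuousLinearMap.coe_smul', Pi.smul_apply,
      ContinuousLinearMap.smulRight_apply, ContinuousLinearMap.comp_apply,
      ContinuousLinearMap.coe_fst', ContinuousLinearMap.coe_snd', Complex.reCLM_apply,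
      Complex.imCLM_apply, Function.comp_apply]
    rw [Real.sq_sqrt hs.le]
    match_scalars
    all_goals try rfl
    all_goals simp only [Complex.real_smul]
    all_goals push_cast
    all_goals try ring
    all_goals try exact rfl
    all_goals norm_cast

  -- scalar facts
  have hrC : ((Real.sqrt s : ℝ) : ℂ) ≠ 0 := by exact_mod_cast hr.ne'
  have hsC : ((s : ℝ) : ℂ) ≠ 0 := by exact_mod_cast hs.ne'
  have hmul : ((Real.sqrt s : ℝ) : ℂ) * ((Real.sqrt s : ℝ) : ℂ) = ((s : ℝ) : ℂ) := by
    rw [← Complex.ofReal_mul, Real.mul_self_sqrt hs.le]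
  have hu2 : ((Real.sqrt s : ℝ) : ℂ)⁻¹ * ((Real.sqrt s : ℝ) : ℂ)⁻¹ = ((s : ℝ) : ℂ)⁻¹ := by
    rw [← mul_inv, hmul]
  have hsexp : ((s : ℝ) : ℂ) =
      (z.1.re : ℂ) ^ 2 + (z.1.im : ℂ) ^ 2 + (z.2.re : ℂ) ^ 2 + (z.2.im : ℂ) ^ 2 := by
    rw [← hsd]
    push_cast [Complex.normSq_apply]
    ring
  have hpoly : ((z.1.re : ℂ) ^ 2 + (z.1.im : ℂ) ^ 2 + (z.2.re : ℂ) ^ 2 + (z.2.im : ℂ) ^ 2) ≠ 0 :=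
    hsexp ▸ hsC
  have hγz : gammaBPSTC z = ((Real.sqrt s : ℝ) : ℂ)⁻¹ • Mbpst z := by
    rw [hgamma z, hsd]
    ext i j
    simp [Matrix.smul_apply, Complex.real_smul, Complex.ofReal_inv]
  have hinvγ : (gammaBPSTC z)⁻¹ = ((Real.sqrt s : ℝ) : ℂ)⁻¹ •
      !![(z.1.re : ℂ) + Complex.I * z.2.im, Complex.I * z.1.im + z.2.re;
         Complex.I * z.1.im - z.2.re, (z.1.re : ℂ) - Complex.I * z.2.im] := by
    apply Matrix.inv_eq_right_inv
    rw [hγz, Mbpst_entries, Matrix.smul_mul, Matrix.mul_smul, smul_smul, hu2]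
    ext i j
    fin_cases i <;> fin_cases j <;>
      simp [Matrix.mul_apply, Fin.sum_univ_two, Matrix.smul_apply, smul_eq_mul,
        Matrix.one_apply, hsexp]
    all_goals field_simp [hpoly]
    all_goals ring_nf
    all_goals simp [Complex.I_sq]
    all_goals try ring
  -- entries of the A matrices and their stars
  have hA1 : Abpst1 z =
      !![(z.2.re : ℂ) - Complex.I * z.2.im,
         ((z.1.re : ℂ) - Complex.I * z.1.im) - ((z.2.re : ℂ) - Complex.I * z.2.im);
         ((z.1.re : ℂ) - Complex.I * z.1.im) + ((z.2.re : ℂ) - Complex.I * z.2.im),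
         -((z.2.re : ℂ) - Complex.I * z.2.im)] := by
    ext i j
    fin_cases i <;> fin_cases j <;>
      simp [Abpst1, pauli1, pauli2, pauli3, Matrix.smul_apply, smul_eq_mul,
        Complex.ext_iff]
    all_goals try (constructor <;> ring)
    all_goals try tauto
    all_goals try ring
  have hA2 : Abpst2 z =
      !![(z.1.re : ℂ) - Complex.I * z.1.im,
         ((z.1.re : ℂ) - Complex.I * z.1.im) - ((z.2.re : ℂ) - Complex.I * z.2.im);
         -(((z.1.re : ℂ) - Complex.I * z.1.im) + ((z.2.re : ℂ) - Complex.I * z.2.im)),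
         -((z.1.re : ℂ) - Complex.I * z.1.im)] := by
    ext i j
    fin_cases i <;> fin_cases j <;>
      simp [Abpst2, pauli1, pauli2, pauli3, Matrix.smul_apply, smul_eq_mul,
        Complex.ext_iff]
    all_goals try (constructor <;> ring)
    all_goals try tauto
    all_goals try ring
  have hA1s : star (Abpst1 z) =
      !![(z.2.re : ℂ) + Complex.I * z.2.im,
         ((z.1.re : ℂ) + Complex.I * z.1.im) + ((z.2.re : ℂ) + Complex.I * z.2.im);
         ((z.1.re : ℂ) + Complex.I * z.1.im) - ((z.2.re : ℂ) + Complex.I * z.2.im),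
         -((z.2.re : ℂ) + Complex.I * z.2.im)] := by
    rw [Matrix.star_eq_conjTranspose, hA1]
    ext i j
    fin_cases i <;> fin_cases j <;>
      simp [Matrix.conjTranspose_apply, Complex.ext_iff]
    all_goals try (constructor <;> ring)
    all_goals try tauto
    all_goals try ring
  have hA2s : star (Abpst2 z) =
      !![(z.1.re : ℂ) + Complex.I * z.1.im,
         -(((z.1.re : ℂ) + Complex.I * z.1.im) + ((z.2.re : ℂ) + Complex.I * z.2.im));
         ((z.1.re : ℂ) + Complex.I * z.1.im) - ((z.2.re : ℂ) + Complex.I * z.2.im),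
         -((z.1.re : ℂ) + Complex.I * z.1.im)] := by
    rw [Matrix.star_eq_conjTranspose, hA2]
    ext i j
    fin_cases i <;> fin_cases j <;>
      simp [Matrix.conjTranspose_apply, Complex.ext_iff]
    all_goals try (constructor <;> ring)
    all_goals try tauto
    all_goals try ring
  -- directional derivative values
  have kv1 : fderiv ℝ gammaBPSTC z (1, 0) = ((Real.sqrt s : ℝ) : ℂ)⁻¹ •
      (Mbpst (1, 0) - ((z.1.re : ℂ) / ((s : ℝ) : ℂ)) • Mbpst z) := by
    rw [key (1, 0)]
    norm_num
  have kv2 : fderiv ℝ gammaBPSTC z (Complex.I, 0) = ((Real.sqrt s : ℝ) : ℂ)⁻¹ •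
      (Mbpst (Complex.I, 0) - ((z.1.im : ℂ) / ((s : ℝ) : ℂ)) • Mbpst z) := by
    rw [key (Complex.I, 0)]
    norm_num
  have kv3 : fderiv ℝ gammaBPSTC z (0, 1) = ((Real.sqrt s : ℝ) : ℂ)⁻¹ •
      (Mbpst (0, 1) - ((z.2.re : ℂ) / ((s : ℝ) : ℂ)) • Mbpst z) := by
    rw [key (0, 1)]
    norm_num
  have kv4 : fderiv ℝ gammaBPSTC z (0, Complex.I) = ((Real.sqrt s : ℝ) : ℂ)⁻¹ •
      (Mbpst (0, Complex.I) - ((z.2.im : ℂ) / ((s : ℝ) : ℂ)) • Mbpst z) := by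
    rw [key (0, Complex.I)]
    norm_num
  -- product factoring
  have hprodm : ∀ X Y : Matrix (Fin 2) (Fin 2) ℂ,
      (gammaBPSTC z)⁻¹ * ((1 / 2 : ℂ) • (((Real.sqrt s : ℝ) : ℂ)⁻¹ • X -
        Complex.I • (((Real.sqrt s : ℝ) : ℂ)⁻¹ • Y))) =
      ((s : ℝ) : ℂ)⁻¹ • ((1 / 2 : ℂ) •
        (!![(z.1.re : ℂ) + Complex.I * z.2.im, Complex.I * z.1.im + z.2.re;
           Complex.I * z.1.im - z.2.re, (z.1.re : ℂ) - Complex.I * z.2.im] *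
          (X - Complex.I • Y))) := by
    intro X Y
    have h1 : (1 / 2 : ℂ) • (((Real.sqrt s : ℝ) : ℂ)⁻¹ • X -
        Complex.I • (((Real.sqrt s : ℝ) : ℂ)⁻¹ • Y)) =
        ((Real.sqrt s : ℝ) : ℂ)⁻¹ • ((1 / 2 : ℂ) • (X - Complex.I • Y)) := by
      module
    rw [h1, hinvγ, Matrix.mul_smul, Matrix.smul_mul, smul_smul, hu2, Matrix.mul_smul]
  have hprodp : ∀ X Y : Matrix (Fin 2) (Fin 2) ℂ,
      (gammaBPSTC z)⁻¹ * ((1 / 2 : ℂ) • (((Real.sqrt s : ℝ) : ℂ)⁻¹ • X +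
        Complex.I • (((Real.sqrt s : ℝ) : ℂ)⁻¹ • Y))) =
      ((s : ℝ) : ℂ)⁻¹ • ((1 / 2 : ℂ) •
        (!![(z.1.re : ℂ) + Complex.I * z.2.im, Complex.I * z.1.im + z.2.re;
           Complex.I * z.1.im - z.2.re, (z.1.re : ℂ) - Complex.I * z.2.im] *
          (X + Complex.I • Y))) := by
    intro X Y
    have h1 : (1 / 2 : ℂ) • (((Real.sqrt s : ℝ) : ℂ)⁻¹ • X +
        Complex.I • (((Real.sqrt s : ℝ) : ℂ)⁻¹ • Y)) =
        ((Real.sqrt s : ℝ) : ℂ)⁻¹ • ((1 / 2 : ℂ) • (X + Complex.I • Y)) := by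
      module
    rw [h1, hinvγ, Matrix.mul_smul, Matrix.smul_mul, smul_smul, hu2, Matrix.mul_smul]
  have m1 : Mbpst (1, 0) = !![(1:ℂ), 0; 0, 1] := by
    rw [Mbpst_entries]; norm_num
  have m2 : Mbpst (Complex.I, 0) = !![(0:ℂ), -Complex.I; -Complex.I, 0] := by
    rw [Mbpst_entries]; norm_num
  have m3 : Mbpst ((0:ℂ), (1:ℂ)) = !![(0:ℂ), -1; 1, 0] := by
    rw [Mbpst_entries]; norm_num
  have m4 : Mbpst ((0:ℂ), Complex.I) = !![-Complex.I, 0; 0, Complex.I] := by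
    rw [Mbpst_entries]; norm_num
  have mz : Mbpst z = !![(z.1.re : ℂ) - Complex.I * z.2.im, -(Complex.I * z.1.im) - z.2.re;
       -(Complex.I * z.1.im) + z.2.re, (z.1.re : ℂ) + Complex.I * z.2.im] := Mbpst_entries z
  have hQQ : !![(z.1.re : ℂ) + Complex.I * z.2.im, Complex.I * z.1.im + z.2.re;
         Complex.I * z.1.im - z.2.re, (z.1.re : ℂ) - Complex.I * z.2.im] * Mbpst z =
      ((s : ℝ) : ℂ) • (1 : Matrix (Fin 2) (Fin 2) ℂ) := by
    rw [mz, hsexp]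
    ext i j
    fin_cases i <;> fin_cases j <;>
      simp [Matrix.mul_apply, Fin.sum_univ_two, Matrix.smul_apply, smul_eq_mul,
        Matrix.one_apply]
    all_goals ring_nf
    all_goals simp [Complex.I_sq]
    all_goals try ring
  have hcombm : ∀ (c1 c2 : ℂ) (P M N R : Matrix (Fin 2) (Fin 2) ℂ),
      P * ((M - c1 • R) - Complex.I • (N - c2 • R)) =
        P * M - Complex.I • (P * N) + (Complex.I * c2 - c1) • (P * R) := by
    intro c1 c2 P M N R
    ext i j
    simp [Matrix.mul_apply, Fin.sum_univ_two, Matrix.smul_apply, smul_eq_mul]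
    ring
  have hcombp : ∀ (c1 c2 : ℂ) (P M N R : Matrix (Fin 2) (Fin 2) ℂ),
      P * ((M - c1 • R) + Complex.I • (N - c2 • R)) =
        P * M + Complex.I • (P * N) - (Complex.I * c2 + c1) • (P * R) := by
    intro c1 c2 P M N R
    ext i j
    simp [Matrix.mul_apply, Fin.sum_univ_two, Matrix.smul_apply, smul_eq_mul]
    ring
  have hI3 : Complex.I ^ 3 = -Complex.I := by
    rw [(by norm_num : 3 = 2 + 1), pow_succ, Complex.I_sq]
    ring
  have hsc : ∀ (x : ℂ), x • (((s : ℝ) : ℂ) • (1 : Matrix (Fin 2) (Fin 2) ℂ)) =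
      (x * ((s : ℝ) : ℂ)) • 1 := fun x => smul_smul x _ _
  have g1 : (gammaBPSTC z)⁻¹ * wderiv1 gammaBPSTC z =
      -((1 / (2 * ((s : ℝ) : ℂ))) • Abpst1 z) := by
    unfold wderiv1
    erw [kv1, kv2]
    rw [hprodm, m1, m2, hcombm, hQQ, hsc, hA1]
    rw [show (Complex.I * ((z.1.im : ℂ) / ((s:ℝ):ℂ)) - (z.1.re : ℂ) / ((s:ℝ):ℂ)) * ((s:ℝ):ℂ)
        = Complex.I * (z.1.im : ℂ) - (z.1.re : ℂ) from by field_simp]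
    ext i j
    fin_cases i <;> fin_cases j <;>
      simp [Matrix.mul_apply, Fin.sum_univ_two, Matrix.smul_apply, smul_eq_mul,
        Matrix.one_apply]
    all_goals ring_nf
    all_goals simp [hI3, Complex.I_sq]
    all_goals try ring
  have g2 : (gammaBPSTC z)⁻¹ * wderiv2 gammaBPSTC z =
      -((1 / (2 * ((s : ℝ) : ℂ))) • Abpst2 z) := by
    unfold wderiv2
    erw [kv3, kv4]
    rw [hprodm, m3, m4, hcombm, hQQ, hsc, hA2]
    rw [show (Complex.I * ((z.2.im : ℂ) / ((s:ℝ):ℂ)) - (z.2.re : ℂ) / ((s:ℝ):ℂ)) * ((s:ℝ):ℂ)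
        = Complex.I * (z.2.im : ℂ) - (z.2.re : ℂ) from by field_simp]
    ext i j
    fin_cases i <;> fin_cases j <;>
      simp [Matrix.mul_apply, Fin.sum_univ_two, Matrix.smul_apply, smul_eq_mul,
        Matrix.one_apply]
    all_goals ring_nf
    all_goals simp [hI3, Complex.I_sq]
    all_goals try ring
  have g3 : (gammaBPSTC z)⁻¹ * wderivbar1 gammaBPSTC z =
      (1 / (2 * ((s : ℝ) : ℂ))) • star (Abpst1 z) := by
    unfold wderivbar1
    erw [kv1, kv2]
    rw [hprodp, m1, m2, hcombp, hQQ, hsc, hA1s]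
    rw [show (Complex.I * ((z.1.im : ℂ) / ((s:ℝ):ℂ)) + (z.1.re : ℂ) / ((s:ℝ):ℂ)) * ((s:ℝ):ℂ)
        = Complex.I * (z.1.im : ℂ) + (z.1.re : ℂ) from by field_simp]
    ext i j
    fin_cases i <;> fin_cases j <;>
      simp [Matrix.mul_apply, Fin.sum_univ_two, Matrix.smul_apply, smul_eq_mul,
        Matrix.one_apply]
    all_goals ring_nf
    all_goals simp [hI3, Complex.I_sq]
    all_goals try ring
  have g4 : (gammaBPSTC z)⁻¹ * wderivbar2 gammaBPSTC z =
      (1 / (2 * ((s : ℝ) : ℂ))) • star (Abpst2 z) := by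
    unfold wderivbar2
    erw [kv3, kv4]
    rw [hprodp, m3, m4, hcombp, hQQ, hsc, hA2s]
    rw [show (Complex.I * ((z.2.im : ℂ) / ((s:ℝ):ℂ)) + (z.2.re : ℂ) / ((s:ℝ):ℂ)) * ((s:ℝ):ℂ)
        = Complex.I * (z.2.im : ℂ) + (z.2.re : ℂ) from by field_simp]
    ext i j
    fin_cases i <;> fin_cases j <;>
      simp [Matrix.mul_apply, Fin.sum_univ_two, Matrix.smul_apply, smul_eq_mul,
        Matrix.one_apply]
    all_goals ring_nf
    all_goals simp [hI3, Complex.I_sq]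
    all_goals try ring
  rw [hsd]
  exact ⟨g1, g2, g3, g4⟩
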